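/- Let P be a probability measure on a 1-bounded pseudometric space (M,m), and let U_0, U_1, …, U_n be a measurable partition of M with diameter(U_i) ≤ ε for all i ≥ 1 and P(U_0) ≤ ε. Choose points x_i ∈ U_i and define the discrete probability measure Q by Q({x_i}) = P(U_i). Then W(m)(P,Q) ≤ 2ε. -/

import Mathlib

open MeasureTheory

def IsPseudometric {M : Type*} (m : M → M → ℝ) : Prop :=
  (∀ x, m x x = 0) ∧ (∀ x y, m x y = m y x) ∧ (∀ x y z, m x z ≤ m x y + m y z)

def Bounded1 {M : Type*} (m : M → M → ℝ) : Prop := ∀ x y, 0 ≤ m x y ∧ m x y ≤ 1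

/-- Wasserstein distance (primal/Kantorovich duality form): sup over 1-bounded
functions `h` that are Lipschitz with respect to `m`, of `∫ h dP − ∫ h dQ`. -/
noncomputable def W {M : Type*} [MeasurableSpace M] (m : M → M → ℝ)
    (P Q : Measure M) : ℝ :=
  sSup {x | ∃ h : M → ℝ, Measurable h ∧ (∀ s, 0 ≤ h s ∧ h s ≤ 1) ∧
    (∀ s s', |h s - h s'| ≤ m s s') ∧ x = (∫ s, h s ∂P) - (∫ s, h s ∂Q)}

theorem wasserstein_discrete_approx {M : Type*} [MeasurableSpace M]
    (m : M → M → ℝ) (hm : IsPseudometric m) (hb : Bounded1 m)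
    (P : Measure M) [IsProbabilityMeasure P]
    (n : ℕ) (U : Fin (n + 1) → Set M)
    (hmeasU : ∀ i, MeasurableSet (U i))
    (hdisj : Pairwise fun i j => Disjoint (U i) (U j))
    (hcover : (⋃ i, U i) = Set.univ)
    (ε : ℝ) (hε : 0 < ε)
    (hdiam : ∀ i : Fin (n + 1), i ≠ 0 → ∀ x ∈ U i, ∀ y ∈ U i, m x y ≤ ε)
    (hU0 : (P (U 0)).toReal ≤ ε)
    (x : Fin (n + 1) → M) (hx : ∀ i, x i ∈ U i) :
    W m P (∑ i, P (U i) • Measure.dirac (x i)) ≤ 2 * ε := by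
  apply Real.sSup_le
  · rintro v ⟨h, hmeas, hbd, hlip, rfl⟩
    have hPU : ∀ i, P (U i) ≠ ⊤ := fun i => (measure_lt_top P _).ne
    have hint : Integrable h P := by
      apply Integrable.mono' (integrable_const 1) hmeas.aestronglyMeasurable
      filter_upwards with s
      rw [Real.norm_eq_abs, abs_le]
      exact ⟨by linarith [(hbd s).1], (hbd s).2⟩
    -- integral over Q
    have hQ : (∫ s, h s ∂(∑ i, P (U i) • Measure.dirac (x i)))
        = ∑ i, (P (U i)).toReal * h (x i) := by
      rw [integral_finset_sum_measure (fun i _ => ?_)]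
      · refine Finset.sum_congr rfl fun i _ => ?_
        rw [integral_smul_measure, integral_dirac' h (x i) hmeas.stronglyMeasurable,
          smul_eq_mul]
      · refine Integrable.smul_measure ?_ (hPU i)
        apply Integrable.mono' (integrable_const 1) hmeas.aestronglyMeasurable
        filter_upwards with s
        rw [Real.norm_eq_abs, abs_le]
        exact ⟨by linarith [(hbd s).1], (hbd s).2⟩
    -- integral over P as a sum
    have hP : (∫ s, h s ∂P) = ∑ i, ∫ s in U i, h s ∂P := by
      rw [← integral_iUnion_fintype hmeasU hdisj (fun i => hint.integrableOn), hcover,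
        Measure.restrict_univ]
    have hintU : ∀ i, IntegrableOn h (U i) P := fun i => hint.integrableOn
    have key : ∀ i : Fin (n+1), (∫ s in U i, h s ∂P) - (P (U i)).toReal * h (x i)
        ≤ (if i = 0 then (P (U 0)).toReal else ε * (P (U i)).toReal) := by
      intro i
      have hconst : (∫ _ in U i, h (x i) ∂P) = (P (U i)).toReal * h (x i) := by
        rw [setIntegral_const, smul_eq_mul, measureReal_def]
      rw [← hconst, ← integral_sub (hintU i) (integrableOn_const (measure_lt_top P _).ne)]
      by_cases hi : i = 0
      · subst hi
        simp only [if_pos rfl]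
        calc (∫ s in U 0, (h s - h (x 0)) ∂P) ≤ ∫ _ in U 0, (1:ℝ) ∂P := by
              apply setIntegral_mono_on ((hintU 0).sub
                (integrableOn_const (measure_lt_top P _).ne))
                (integrableOn_const (measure_lt_top P _).ne) (hmeasU 0)
              intro s _
              simp only [Pi.sub_apply]
              linarith [(hbd s).2, (hbd (x 0)).1]
          _ = (P (U 0)).toReal := by rw [setIntegral_const, smul_eq_mul, mul_one, measureReal_def]
      · rw [if_neg hi]
        calc (∫ s in U i, (h s - h (x i)) ∂P) ≤ ∫ _ in U i, ε ∂P := by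
              apply setIntegral_mono_on ((hintU i).sub
                (integrableOn_const (measure_lt_top P _).ne))
                (integrableOn_const (measure_lt_top P _).ne) (hmeasU i)
              intro s hs
              simp only [Pi.sub_apply]
              calc h s - h (x i) ≤ |h s - h (x i)| := le_abs_self _
                _ ≤ m s (x i) := hlip s (x i)
                _ ≤ ε := hdiam i hi s hs (x i) (hx i)
          _ = ε * (P (U i)).toReal := by rw [setIntegral_const, smul_eq_mul, mul_comm, measureReal_def]
    have hsumP : ∑ i, (P (U i)).toReal = 1 := by
      have : ∑ i, P (U i) = 1 := by
        rw [← tsum_fintype (L := SummationFilter.unconditional _), ← measure_iUnion hdisj hmeasU, hcover, measure_univ]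
      rw [← ENNReal.toReal_sum (fun i _ => hPU i), this, ENNReal.toReal_one]
    rw [hQ, hP, ← Finset.sum_sub_distrib]
    calc ∑ i, ((∫ s in U i, h s ∂P) - (P (U i)).toReal * h (x i))
        ≤ ∑ i, (if i = 0 then (P (U 0)).toReal else ε * (P (U i)).toReal) :=
          Finset.sum_le_sum fun i _ => key i
      _ ≤ ε + ε * ∑ i, (P (U i)).toReal := by
          rw [Fin.sum_univ_succ, if_pos rfl]
          apply add_le_add hU0
          rw [Finset.sum_congr rfl fun (i : Fin n) _ => if_neg (Fin.succ_ne_zero i),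
            ← Finset.mul_sum]
          apply mul_le_mul_of_nonneg_left _ hε.le
          rw [Fin.sum_univ_succ]
          exact le_add_of_nonneg_left ENNReal.toReal_nonneg
      _ = 2 * ε := by rw [hsumP]; ring
  · positivity
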